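/- Let β, N₀, κ, ν, M > 0 and η ≥ 0 be real numbers, and let u be the unique positive real number satisfying (u − 1)e^u = κ M² β ν / N₀ − 1. Then the maximum over z > 0 of g(z) = log₂(1 + (Mβ/N₀) z) / (z/κ + νM + η·log₂(1 + (Mβ/N₀) z)) equals u·log₂(e) / ( N₀(e^u − 1)/(κMβ) + νM + η·u·log₂(e) ); that is, g(N₀(e^u − 1)/(Mβ)) has exactly this value. -/

import Mathlib

noncomputable def g3 (β N₀ κ ν η M z : ℝ) : ℝ :=
  Real.logb 2 (1 + (M * β / N₀) * z) /
    (z / κ + ν * M + η * Real.logb 2 (1 + (M * β / N₀) * z))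

lemma core3 (u t : ℝ) (ht : 0 < t) :
    Real.exp u * Real.log t ≤ t + (u - 1) * Real.exp u := by
  have h := Real.add_one_le_exp (Real.log t - u)
  rw [Real.exp_sub, Real.exp_log ht] at h
  have he : 0 < Real.exp u := Real.exp_pos u
  rw [le_div_iff₀ he] at h
  nlinarith

/-- Equation (12) of the paper: the maximum of `g3` over `z > 0` equals
`u log₂(e) / (N₀(e^u - 1)/(κMβ) + νM + η u log₂(e))`, attained at
`z* = N₀(e^u - 1)/(Mβ)`. -/
theorem stmt_3 (β N₀ κ ν M η u : ℝ) (hβ : 0 < β) (hN : 0 < N₀) (hκ : 0 < κ)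
    (hν : 0 < ν) (hM : 0 < M) (hη : 0 ≤ η) (hu : 0 < u)
    (hue : (u - 1) * Real.exp u = κ * M ^ 2 * β * ν / N₀ - 1) :
    (∀ z : ℝ, 0 < z →
      g3 β N₀ κ ν η M z ≤
        u * Real.logb 2 (Real.exp 1) /
          (N₀ * (Real.exp u - 1) / (κ * M * β) + ν * M +
            η * u * Real.logb 2 (Real.exp 1))) ∧
    g3 β N₀ κ ν η M (N₀ * (Real.exp u - 1) / (M * β)) =
      u * Real.logb 2 (Real.exp 1) /
        (N₀ * (Real.exp u - 1) / (κ * M * β) + ν * M +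
          η * u * Real.logb 2 (Real.exp 1)) := by
  have hc : 0 < Real.log 2 := Real.log_pos one_lt_two
  have he : 0 < Real.exp u := Real.exp_pos u
  have heu : 1 < Real.exp u := by
    calc (1:ℝ) = Real.exp 0 := Real.exp_zero.symm
    _ < Real.exp u := Real.exp_lt_exp.mpr hu
  have h1 : κ * M ^ 2 * β * ν = N₀ * ((u - 1) * Real.exp u + 1) := by
    field_simp at hue
    nlinarith [hue]
  have hkMβ : (0:ℝ) < κ * M * β := by positivity
  have hD' : 0 < N₀ * (Real.exp u - 1) / (κ * M * β) + ν * M +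
      η * u * (1 / Real.log 2) := by
    have h2 : 0 < N₀ * (Real.exp u - 1) / (κ * M * β) :=
      div_pos (by nlinarith) hkMβ
    have h3 : 0 ≤ η * u * (1 / Real.log 2) := by positivity
    nlinarith [mul_pos hν hM]
  constructor
  · intro z hz
    have haz : 0 < (M * β / N₀) * z := by positivity
    have hL : 0 ≤ Real.log (1 + (M * β / N₀) * z) := by
      apply Real.log_nonneg; linarith
    have hDz : 0 < z / κ + ν * M + η * (Real.log (1 + (M * β / N₀) * z) / Real.log 2) := by
      have h4 : 0 ≤ η * (Real.log (1 + (M * β / N₀) * z) / Real.log 2) := by positivity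
      have h2 : 0 < z / κ := by positivity
      nlinarith [mul_pos hν hM]
    have hcore := core3 u (1 + (M * β / N₀) * z) (by linarith)
    have hcoef : N₀ * (Real.exp u - 1) / (κ * M * β) + ν * M
        = N₀ * (u * Real.exp u) / (κ * M * β) := by
      rw [div_add' _ _ _ (ne_of_gt hkMβ),
        div_eq_div_iff (ne_of_gt hkMβ) (ne_of_gt hkMβ)]
      linear_combination (κ * M * β) * h1
    have hmul := mul_le_mul_of_nonneg_left hcore (le_of_lt (mul_pos hu hN))
    have hrhs : u * N₀ * ((1 + (M * β / N₀) * z) + (u - 1) * Real.exp u)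
        = u * (z / κ + ν * M) * (κ * M * β) := by
      field_simp
      linear_combination (-1 : ℝ) * h1
    have key : Real.log (1 + (M * β / N₀) * z) *
        (N₀ * (Real.exp u - 1) / (κ * M * β) + ν * M) ≤ u * (z / κ + ν * M) := by
      rw [hcoef]
      rw [show Real.log (1 + (M * β / N₀) * z) * (N₀ * (u * Real.exp u) / (κ * M * β))
          = Real.log (1 + (M * β / N₀) * z) * (N₀ * (u * Real.exp u)) / (κ * M * β) from by
        ring]
      rw [div_le_iff₀ hkMβ]
      calc Real.log (1 + (M * β / N₀) * z) * (N₀ * (u * Real.exp u))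
          ≤ u * N₀ * ((1 + (M * β / N₀) * z) + (u - 1) * Real.exp u) := by nlinarith [hmul]
        _ = u * (z / κ + ν * M) * (κ * M * β) := hrhs
    simp only [g3, Real.logb, Real.log_exp]
    rw [div_le_div_iff₀ hDz hD']
    have expand : Real.log (1 + M * β / N₀ * z) / Real.log 2 *
        (N₀ * (Real.exp u - 1) / (κ * M * β) + ν * M + η * u * (1 / Real.log 2))
        = (Real.log (1 + M * β / N₀ * z) *
            (N₀ * (Real.exp u - 1) / (κ * M * β) + ν * M)) / Real.log 2
          + η * u * Real.log (1 + M * β / N₀ * z) / (Real.log 2 * Real.log 2) := by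
      ring
    have expand2 : u * (1 / Real.log 2) *
        (z / κ + ν * M + η * (Real.log (1 + M * β / N₀ * z) / Real.log 2))
        = (u * (z / κ + ν * M)) / Real.log 2
          + η * u * Real.log (1 + M * β / N₀ * z) / (Real.log 2 * Real.log 2) := by
      ring
    rw [expand, expand2]
    gcongr
  · simp only [g3, Real.logb, Real.log_exp]
    have hx : (M * β / N₀) * (N₀ * (Real.exp u - 1) / (M * β)) = Real.exp u - 1 := by
      field_simp
    rw [hx, show (1 : ℝ) + (Real.exp u - 1) = Real.exp u from by ring, Real.log_exp]
    have hzk : N₀ * (Real.exp u - 1) / (M * β) / κ = N₀ * (Real.exp u - 1) / (κ * M * β) := by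
      rw [div_div]; ring_nf
    rw [hzk]
    ring_nf
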